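/- Let U = [[1,1],[0,1]] and L = [[1,0],[1,1]] in SL₂(ℤ). Then the subgroup Γ(2) of SL₂(ℤ) consisting of matrices congruent to the identity modulo 2 is generated by U², L², and -I. -/

import Mathlib

open Matrix

/-- The transvection `U = [[1,1],[0,1]]` in `SL₂(ℤ)`. -/
def Umat : Matrix.SpecialLinearGroup (Fin 2) ℤ :=
  ⟨!![1, 1; 0, 1], by norm_num [Matrix.det_fin_two_of]⟩

/-- The transvection `L = [[1,0],[1,1]]` in `SL₂(ℤ)`. -/
def Lmat : Matrix.SpecialLinearGroup (Fin 2) ℤ :=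
  ⟨!![1, 0; 1, 1], by norm_num [Matrix.det_fin_two_of]⟩

/-- `-I` in `SL₂(ℤ)`. -/
def negI : Matrix.SpecialLinearGroup (Fin 2) ℤ :=
  ⟨!![-1, 0; 0, -1], by norm_num [Matrix.det_fin_two_of]⟩

namespace Stmt8Aux

abbrev SL2 := Matrix.SpecialLinearGroup (Fin 2) ℤ

lemma cast2_eq_zero {x : ℤ} : ((x : ZMod 2) = 0) ↔ Even x := by
  rw [ZMod.intCast_zmod_eq_zero_iff_dvd, Int.even_iff]; omega

lemma cast2_eq_one {x : ℤ} : ((x : ZMod 2) = 1) ↔ Odd x := by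
  rw [show (1 : ZMod 2) = ((1:ℤ) : ZMod 2) from rfl, ZMod.intCast_eq_intCast_iff,
    Int.modEq_iff_dvd, Int.odd_iff]
  omega

/-- parity condition is exactly membership in `Γ(2)`. -/
lemma parity_iff (A : SL2) :
    (Odd (A.1 0 0) ∧ Even (A.1 0 1) ∧ Even (A.1 1 0) ∧ Odd (A.1 1 1)) ↔
      A ∈ CongruenceSubgroup.Gamma 2 := by
  simp only [CongruenceSubgroup.Gamma_mem, cast2_eq_one, cast2_eq_zero]

lemma Umat_eq_T : Umat = ModularGroup.T := rfl

lemma coe_U_zpow (n : ℤ) : (Umat ^ n).1 = !![1, n; 0, 1] := by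
  rw [Umat_eq_T]; exact ModularGroup.coe_T_zpow n

lemma coe_L_inv : (Lmat⁻¹).1 = !![1, 0; -1, 1] := by
  rw [Matrix.SpecialLinearGroup.coe_inv]
  simp [Lmat, Matrix.adjugate_fin_two]

lemma coe_L_zpow (n : ℤ) : (Lmat ^ n).1 = !![1, 0; n, 1] := by
  induction' n using Int.induction_on with n h n h
  · rw [zpow_zero, Matrix.SpecialLinearGroup.coe_one, Matrix.one_fin_two]
  · simp_rw [_root_.zpow_add, zpow_one, Matrix.SpecialLinearGroup.coe_mul, h,
      show (Lmat : Matrix (Fin 2) (Fin 2) ℤ) = !![1, 0; 1, 1] from rfl, Matrix.mul_fin_two]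
    congrm !![?_, ?_; ?_, ?_] <;> ring
  · simp_rw [_root_.zpow_sub, zpow_one, Matrix.SpecialLinearGroup.coe_mul, h, coe_L_inv,
      Matrix.mul_fin_two]
    congrm !![?_, ?_; ?_, ?_] <;> ring

lemma upper_mul (t : ℤ) (M : Matrix (Fin 2) (Fin 2) ℤ) :
    !![1, t; 0, 1] * M = !![M 0 0 + t * M 1 0, M 0 1 + t * M 1 1; M 1 0, M 1 1] := by
  ext i j; fin_cases i <;> fin_cases j <;>
    simp [Matrix.mul_apply, Fin.sum_univ_two] <;> ring

lemma lower_mul (t : ℤ) (M : Matrix (Fin 2) (Fin 2) ℤ) :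
    !![1, 0; t, 1] * M = !![M 0 0, M 0 1; M 1 0 + t * M 0 0, M 1 1 + t * M 0 1] := by
  ext i j; fin_cases i <;> fin_cases j <;>
    simp [Matrix.mul_apply, Fin.sum_univ_two] <;> ring

lemma eq_of_entries (A : SL2) (M : Matrix (Fin 2) (Fin 2) ℤ)
    (h00 : A.1 0 0 = M 0 0) (h01 : A.1 0 1 = M 0 1)
    (h10 : A.1 1 0 = M 1 0) (h11 : A.1 1 1 = M 1 1) : A.1 = M := by
  ext i j; fin_cases i <;> fin_cases j <;> assumption

def S8 : Subgroup SL2 := Subgroup.closure {Umat ^ 2, Lmat ^ 2, negI}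

lemma U_zpow_mem {t : ℤ} (ht : t = 2 ∨ t = -2) : Umat ^ t ∈ S8 := by
  have hU : Umat ^ 2 ∈ S8 := Subgroup.subset_closure (by left; rfl)
  rcases ht with rfl | rfl
  · simpa using hU
  · have : Umat ^ (-2 : ℤ) = (Umat ^ 2)⁻¹ := by
      rw [← zpow_natCast Umat 2]; simp
    rw [this]; exact S8.inv_mem hU

lemma L_zpow_mem {t : ℤ} (ht : t = 2 ∨ t = -2) : Lmat ^ t ∈ S8 := by
  have hL : Lmat ^ 2 ∈ S8 := Subgroup.subset_closure (by right; left; rfl)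
  rcases ht with rfl | rfl
  · simpa using hL
  · have : Lmat ^ (-2 : ℤ) = (Lmat ^ 2)⁻¹ := by
      rw [← zpow_natCast Lmat 2]; simp
    rw [this]; exact S8.inv_mem hL

lemma U_zpow_gamma {t : ℤ} (ht : Even t) : Umat ^ t ∈ CongruenceSubgroup.Gamma 2 := by
  rw [← parity_iff, coe_U_zpow]
  refine ⟨?_, ?_, ?_, ?_⟩ <;> simp [ht]

lemma L_zpow_gamma {t : ℤ} (ht : Even t) : Lmat ^ t ∈ CongruenceSubgroup.Gamma 2 := by
  rw [← parity_iff, coe_L_zpow]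
  refine ⟨?_, ?_, ?_, ?_⟩ <;> simp [ht]

lemma negI_mem : negI ∈ S8 := Subgroup.subset_closure (by right; right; rfl)

lemma main : ∀ n : ℕ, ∀ A : SL2,
    (A.1 0 0).natAbs + (A.1 1 0).natAbs ≤ n →
    A ∈ CongruenceSubgroup.Gamma 2 → A ∈ S8 := by
  intro n
  induction' n with n ih
  · intro A hn hA
    obtain ⟨ha, -, -, -⟩ := (parity_iff A).mpr hA
    rw [Int.odd_iff] at ha
    omega
  intro A hn hA
  obtain ⟨ha, hb, hc, hd⟩ := (parity_iff A).mpr hA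
  set a := A.1 0 0 with ha'
  set b := A.1 0 1 with hb'
  set c := A.1 1 0 with hc'
  set d := A.1 1 1 with hd'
  have hdet : a * d - b * c = 1 := by
    rw [ha', hb', hc', hd', ← Matrix.det_fin_two]; exact A.2
  by_cases hc0 : c = 0
  · -- c = 0 : A = ± U^b with b even
    have had : a * d = 1 := by rw [hc0] at hdet; linarith
    obtain ⟨k, hk⟩ := hb
    rcases Int.eq_one_or_neg_one_of_mul_eq_one' had with ⟨ha1, hd1⟩ | ⟨ha1, hd1⟩
    · have hAeq : A = Umat ^ (b : ℤ) := by
        apply Subtype.ext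
        rw [coe_U_zpow]
        apply eq_of_entries
        · simpa using ha1
        · simpa using hb'.symm
        · simpa using hc0
        · simpa using hd1
      rw [hAeq, show (b : ℤ) = 2 * k by omega, _root_.zpow_mul]
      exact Subgroup.zpow_mem _ (U_zpow_mem (Or.inl rfl)) k
    · have hX : (negI * Umat ^ (-b : ℤ)).1 = !![-1, b; 0, -1] := by
        rw [Matrix.SpecialLinearGroup.coe_mul, coe_U_zpow,
          show (negI : Matrix (Fin 2) (Fin 2) ℤ) = !![-1,0;0,-1] from rfl,
          Matrix.mul_fin_two]
        norm_num
      have hAeq : A = negI * Umat ^ (-b : ℤ) := by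
        apply Subtype.ext
        rw [hX]
        apply eq_of_entries
        · simpa using ha1
        · simpa using hb'.symm
        · simpa using hc0
        · simpa using hd1
      rw [hAeq, show (-b : ℤ) = 2 * (-k) by omega, _root_.zpow_mul]
      exact S8.mul_mem negI_mem (Subgroup.zpow_mem _ (U_zpow_mem (Or.inl rfl)) (-k))
  · -- c ≠ 0
    have ha0 : a ≠ 0 := by rcases ha with ⟨m, hm⟩; omega
    have hane : a.natAbs ≠ c.natAbs := by
      rcases ha with ⟨m, hm⟩; rcases hc with ⟨l, hl⟩; omega
    rcases Nat.lt_or_ge c.natAbs a.natAbs with hlt | hge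
    · -- reduce a
      obtain ⟨t, ht, hsmall⟩ : ∃ t : ℤ, (t = 2 ∨ t = -2) ∧ (a + t * c).natAbs < a.natAbs := by
        rcases le_or_gt 0 a with h1 | h1 <;> rcases le_or_gt 0 c with h2 | h2
        · exact ⟨-2, Or.inr rfl, by omega⟩
        · exact ⟨2, Or.inl rfl, by omega⟩
        · exact ⟨2, Or.inl rfl, by omega⟩
        · exact ⟨-2, Or.inr rfl, by omega⟩
      set W := Umat ^ t with hW
      have hB : (W * A).1 = !![a + t * c, b + t * d; c, d] := by
        rw [Matrix.SpecialLinearGroup.coe_mul, hW, coe_U_zpow, upper_mul,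
          ← ha', ← hb', ← hc', ← hd']
      have hWG : W ∈ CongruenceSubgroup.Gamma 2 :=
        U_zpow_gamma (by rcases ht with rfl | rfl <;> norm_num)
      have hBmem : W * A ∈ S8 := by
        apply ih (W * A)
        · rw [hB]
          simp only [Matrix.cons_val_zero, Matrix.cons_val_one, Matrix.head_cons,
            Matrix.cons_val', Matrix.head_fin_const, Matrix.of_apply, Matrix.empty_val',
            Matrix.cons_val_fin_one]
          omega
        · exact Subgroup.mul_mem _ hWG hA
      have : A = W⁻¹ * (W * A) := by group
      rw [this]
      exact S8.mul_mem (S8.inv_mem (U_zpow_mem ht)) hBmem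
    · -- reduce c
      have hlt : a.natAbs < c.natAbs := by omega
      obtain ⟨t, ht, hsmall⟩ : ∃ t : ℤ, (t = 2 ∨ t = -2) ∧ (c + t * a).natAbs < c.natAbs := by
        rcases le_or_gt 0 a with h1 | h1 <;> rcases le_or_gt 0 c with h2 | h2
        · exact ⟨-2, Or.inr rfl, by omega⟩
        · exact ⟨2, Or.inl rfl, by omega⟩
        · exact ⟨2, Or.inl rfl, by omega⟩
        · exact ⟨-2, Or.inr rfl, by omega⟩
      set W := Lmat ^ t with hW
      have hB : (W * A).1 = !![a, b; c + t * a, d + t * b] := by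
        rw [Matrix.SpecialLinearGroup.coe_mul, hW, coe_L_zpow, lower_mul,
          ← ha', ← hb', ← hc', ← hd']
      have hWG : W ∈ CongruenceSubgroup.Gamma 2 :=
        L_zpow_gamma (by rcases ht with rfl | rfl <;> norm_num)
      have hBmem : W * A ∈ S8 := by
        apply ih (W * A)
        · rw [hB]
          simp only [Matrix.cons_val_zero, Matrix.cons_val_one, Matrix.head_cons,
            Matrix.cons_val', Matrix.head_fin_const, Matrix.of_apply, Matrix.empty_val',
            Matrix.cons_val_fin_one]
          omega
        · exact Subgroup.mul_mem _ hWG hA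
      have : A = W⁻¹ * (W * A) := by group
      rw [this]
      exact S8.mul_mem (S8.inv_mem (L_zpow_mem ht)) hBmem

end Stmt8Aux

theorem stmt8 (A : Matrix.SpecialLinearGroup (Fin 2) ℤ) :
    (Odd (A.1 0 0) ∧ Even (A.1 0 1) ∧ Even (A.1 1 0) ∧ Odd (A.1 1 1)) ↔
      A ∈ Subgroup.closure ({Umat ^ 2, Lmat ^ 2, negI} :
        Set (Matrix.SpecialLinearGroup (Fin 2) ℤ)) := by
  constructor
  · intro h
    exact Stmt8Aux.main _ A le_rfl ((Stmt8Aux.parity_iff A).mp h)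
  · intro h
    refine (Stmt8Aux.parity_iff A).mpr ?_
    refine (Subgroup.closure_le _).mpr ?_ h
    rintro x (rfl | rfl | rfl) <;> rw [SetLike.mem_coe]
    · have : Umat ^ (2:ℕ) = Umat ^ ((2:ℕ):ℤ) := (zpow_natCast _ 2).symm
      rw [this]; exact Stmt8Aux.U_zpow_gamma (by norm_num)
    · have : Lmat ^ (2:ℕ) = Lmat ^ ((2:ℕ):ℤ) := (zpow_natCast _ 2).symm
      rw [this]; exact Stmt8Aux.L_zpow_gamma (by norm_num)
    · rw [← Stmt8Aux.parity_iff]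
      refine ⟨⟨-1, by norm_num [negI]⟩, ⟨0, by norm_num [negI]⟩,
        ⟨0, by norm_num [negI]⟩, ⟨-1, by norm_num [negI]⟩⟩
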